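/- Let g : [a,b] → ℝ be Lipschitz and let ū ∈ [a,b] be a contact point, i.e. conv_{[a,b]} g (ū) = g(ū). Then the convex envelope of g on [a,b] restricted to [a,ū] equals the convex envelope of g restricted to [a,ū]: for all x ∈ [a,ū], conv_{[a,b]} g (x) = conv_{[a,ū]} g (x). -/

import Mathlib

open Set

/-- The convex envelope of `g` on the interval `[a,b]`: the pointwise supremum of all
convex functions on `[a,b]` lying below `g` on `[a,b]`. -/
noncomputable def convEnv (a b : ℝ) (g : ℝ → ℝ) : ℝ → ℝ :=
  fun u => sSup {y : ℝ | ∃ h : ℝ → ℝ, ConvexOn ℝ (Set.Icc a b) h ∧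
    (∀ x ∈ Set.Icc a b, h x ≤ g x) ∧ y = h u}

/-- Secant slope of the chord over a middle point lies between the two sub-slopes. -/
lemma mid_slope {x c z vx w vz : ℝ} (h1 : x < c) (h2 : c < z)
    (hs : (w - vx) / (c - x) ≤ (vz - w) / (z - c)) :
    (w - vx) / (c - x) ≤ (vz - vx) / (z - x) ∧ (vz - vx) / (z - x) ≤ (vz - w) / (z - c) := by
  have hcx : (0:ℝ) < c - x := by linarith
  have hzc : (0:ℝ) < z - c := by linarith
  have hzx : (0:ℝ) < z - x := by linarith
  rw [div_le_div_iff₀ hcx hzc] at hs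
  constructor
  · rw [div_le_div_iff₀ hcx hzx]; nlinarith
  · rw [div_le_div_iff₀ hzx hzc]; nlinarith

/-- Gluing a convex function `F` on `[a,c]` with a convex function `k` on `[a,b]`,
when `F ≥ k` on `[a,c]` and `F c = k c`, yields a convex function on `[a,b]`. -/
lemma glue_convex {a b c : ℝ} (hac : a ≤ c) (hcb : c ≤ b) {F k : ℝ → ℝ}
    (hF : ConvexOn ℝ (Set.Icc a c) F) (hk : ConvexOn ℝ (Set.Icc a b) k)
    (hFk : ∀ u ∈ Set.Icc a c, k u ≤ F u) (hFc : F c = k c) :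
    ConvexOn ℝ (Set.Icc a b) (fun u => if u ≤ c then F u else k u) := by
  set H : ℝ → ℝ := fun u => if u ≤ c then F u else k u with hH
  have hright : ∀ p, c ≤ p → H p = k p := by
    intro p hp
    by_cases h : p ≤ c
    · have : p = c := le_antisymm h hp
      simp [hH, h, this, hFc]
    · simp [hH, h]
  have hleft : ∀ p, p ≤ c → H p = F p := by intro p hp; simp [hH, hp]
  apply convexOn_of_slope_mono_adjacent (convex_Icc a b)
  intro x y z hx hz hxy hyz
  have hax : a ≤ x := hx.1
  have hzb : z ≤ b := hz.2
  rcases le_or_gt z c with hzc | hcz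
  · -- all three in [a,c]
    rw [hleft x (by linarith), hleft y (by linarith), hleft z hzc]
    exact hF.slope_mono_adjacent ⟨hax, by linarith⟩ ⟨by linarith, hzc⟩ hxy hyz
  rcases le_or_gt x c with hxc | hcx
  · -- x ≤ c < z
    rcases le_or_gt y c with hyc | hcy
    · -- x < y ≤ c < z
      rw [hleft x hxc, hleft y hyc, hright z hcz.le]
      have hkx : k x ≤ F x := hFk x ⟨hax, hxc⟩
      have hky : k y ≤ F y := hFk y ⟨by linarith, hyc⟩
      rcases eq_or_lt_of_le hyc with hyc' | hyc'
      · -- y = c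
        subst hyc'
        rw [hFc]
        have e1 : (k y - F x) / (y - x) ≤ (k y - k x) / (y - x) := by
          gcongr <;> linarith
        have e2 : (k y - k x) / (y - x) ≤ (k z - k y) / (z - y) :=
          hk.slope_mono_adjacent ⟨hax, by linarith⟩ hz hxy hyz
        linarith
      · -- y < c
        have s1 : (F y - F x) / (y - x) ≤ (F c - F y) / (c - y) :=
          hF.slope_mono_adjacent ⟨hax, hxc⟩ ⟨hac, le_rfl⟩ hxy hyc'
        have s2 : (k c - F y) / (c - y) ≤ (k z - k c) / (z - c) := by
          have e1 : (k c - F y) / (c - y) ≤ (k c - k y) / (c - y) := by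
            gcongr <;> linarith
          have e2 : (k c - k y) / (c - y) ≤ (k z - k c) / (z - c) :=
            hk.slope_mono_adjacent ⟨by linarith, by linarith⟩ hz hyc' hcz
          linarith
        have h3 := (mid_slope hyc' hcz s2).1
        rw [hFc] at s1
        linarith
    · -- x ≤ c < y < z
      rw [hleft x hxc, hright y hcy.le, hright z (by linarith)]
      rcases eq_or_lt_of_le hxc with hxc' | hxc'
      · subst hxc'
        rw [hFc]
        exact hk.slope_mono_adjacent hx hz hxy hyz
      · have hkx : k x ≤ F x := hFk x ⟨hax, hxc⟩
        have s2 : (k c - F x) / (c - x) ≤ (k y - k c) / (y - c) := by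
          have e1 : (k c - F x) / (c - x) ≤ (k c - k x) / (c - x) := by
            gcongr <;> linarith
          have e2 : (k c - k x) / (c - x) ≤ (k y - k c) / (y - c) :=
            hk.slope_mono_adjacent hx ⟨by linarith, by linarith⟩ hxc' hcy
          linarith
        have h3 := (mid_slope hxc' hcy s2).2
        have s3 : (k y - k c) / (y - c) ≤ (k z - k y) / (z - y) :=
          hk.slope_mono_adjacent ⟨hac, hcb⟩ hz hcy hyz
        linarith
  · -- c < x : all three to the right
    rw [hright x hcx.le, hright y (by linarith), hright z (by linarith)]
    exact hk.slope_mono_adjacent hx hz hxy hyz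

theorem stmt11 (a b ubar : ℝ) (h1 : a ≤ ubar) (h2 : ubar ≤ b)
    (g : ℝ → ℝ) (L : NNReal) (hg : LipschitzOnWith L g (Set.Icc a b))
    (hcontact : convEnv a b g ubar = g ubar) :
    ∀ x ∈ Set.Icc a ubar, convEnv a b g x = convEnv a ubar g x := by
  have hab : a ≤ b := h1.trans h2
  have hsub : Set.Icc a ubar ⊆ Set.Icc a b := Set.Icc_subset_Icc le_rfl h2
  set ℓ : ℝ → ℝ := fun u => g a - (L : ℝ) * (u - a) with hℓ
  have hℓconv : ∀ s : Set ℝ, Convex ℝ s → ConvexOn ℝ s ℓ := by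
    intro s hs
    refine ⟨hs, ?_⟩
    intro p _ q _ t u ht hu htu
    simp only [hℓ, smul_eq_mul]
    have : g a - (L:ℝ) * (t * p + u * q - a) =
        t * (g a - (L:ℝ) * (p - a)) + u * (g a - (L:ℝ) * (q - a)) := by
      linear_combination (-(g a) - (L:ℝ) * a) * htu
    linarith
  have hℓle : ∀ u ∈ Set.Icc a b, ℓ u ≤ g u := by
    intro u hu
    have hd := hg.dist_le_mul u hu a (Set.left_mem_Icc.mpr hab)
    rw [Real.dist_eq, Real.dist_eq, abs_of_nonneg (by linarith [hu.1] : (0:ℝ) ≤ u - a)] at hd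
    have := abs_le.mp hd
    simp only [hℓ]
    linarith [this.1]
  -- the admissible sets
  set Sb : ℝ → Set ℝ := fun u => {y : ℝ | ∃ h : ℝ → ℝ, ConvexOn ℝ (Set.Icc a b) h ∧
    (∀ x ∈ Set.Icc a b, h x ≤ g x) ∧ y = h u} with hSb
  set Ss : ℝ → Set ℝ := fun u => {y : ℝ | ∃ h : ℝ → ℝ, ConvexOn ℝ (Set.Icc a ubar) h ∧
    (∀ x ∈ Set.Icc a ubar, h x ≤ g x) ∧ y = h u} with hSs
  have hEb : ∀ u, convEnv a b g u = sSup (Sb u) := fun u => rfl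
  have hEs : ∀ u, convEnv a ubar g u = sSup (Ss u) := fun u => rfl
  have hSbne : ∀ u, (Sb u).Nonempty := fun u =>
    ⟨ℓ u, ℓ, hℓconv _ (convex_Icc a b), hℓle, rfl⟩
  have hSsne : ∀ u, (Ss u).Nonempty := fun u =>
    ⟨ℓ u, ℓ, hℓconv _ (convex_Icc a ubar), fun v hv => hℓle v (hsub hv), rfl⟩
  have hSbbdd : ∀ u ∈ Set.Icc a b, BddAbove (Sb u) := by
    rintro u hu
    refine ⟨g u, ?_⟩
    rintro y ⟨h, _, hle, rfl⟩
    exact hle u hu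
  have hSsbdd : ∀ u ∈ Set.Icc a ubar, BddAbove (Ss u) := by
    rintro u hu
    refine ⟨g u, ?_⟩
    rintro y ⟨h, _, hle, rfl⟩
    exact hle u hu
  intro x hx
  refine le_antisymm ?_ ?_
  · -- easy direction : Sb x ⊆ Ss x
    rw [hEb, hEs]
    apply csSup_le_csSup (hSsbdd x hx) (hSbne x)
    rintro y ⟨h, hconv, hle, rfl⟩
    exact ⟨h, hconv.subset hsub (convex_Icc a ubar), fun v hv => hle v (hsub hv), rfl⟩
  · -- hard direction
    rw [hEb, hEs]
    apply csSup_le (hSsne x)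
    rintro y ⟨h, hconv, hle, rfl⟩
    apply le_of_forall_pos_le_add
    intro ε hε
    -- find an admissible k on [a,b] with k ubar > g ubar - ε
    have hcon : g ubar - ε < sSup (Sb ubar) := by
      rw [← hEb, hcontact]; linarith
    obtain ⟨w, hw, hlt⟩ := exists_lt_of_lt_csSup (hSbne ubar) hcon
    obtain ⟨k, hkconv, hkle, rfl⟩ := hw
    -- build the glued function
    set F : ℝ → ℝ := fun u => max (h u - ε) (k u) with hF
    have hhconv : ConvexOn ℝ (Set.Icc a ubar) (fun u => h u - ε) := by
      refine ⟨convex_Icc a ubar, fun p hp q hq s t hs ht hst => ?_⟩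
      have hc := hconv.2 hp hq hs ht hst
      simp only [smul_eq_mul] at hc ⊢
      have e : s * (h p - ε) + t * (h q - ε) = s * h p + t * h q - ε := by
        linear_combination (-ε) * hst
      linarith
    have hFconv : ConvexOn ℝ (Set.Icc a ubar) F :=
      hhconv.sup (hkconv.subset hsub (convex_Icc a ubar))
    have hFk : ∀ u ∈ Set.Icc a ubar, k u ≤ F u := fun u _ => le_max_right _ _
    have hFc : F ubar = k ubar := by
      apply max_eq_right
      have := hle ubar (Set.right_mem_Icc.mpr h1)
      linarith
    have Hconv := glue_convex h1 h2 hFconv hkconv hFk hFc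
    set H : ℝ → ℝ := fun u => if u ≤ ubar then F u else k u with hHdef
    have Hle : ∀ v ∈ Set.Icc a b, H v ≤ g v := by
      intro v hv
      simp only [hHdef]
      split_ifs with hvc
      · simp only [hF]
        apply max_le
        · have := hle v ⟨hv.1, hvc⟩; linarith
        · exact hkle v hv
      · exact hkle v hv
    have hHmem : H x ∈ Sb x := ⟨H, Hconv, Hle, rfl⟩
    have hHx : H x = F x := by simp only [hHdef, if_pos hx.2]
    have : h x - ε ≤ H x := by rw [hHx]; exact le_max_left _ _
    have hle2 : H x ≤ sSup (Sb x) := le_csSup (hSbbdd x (hsub hx)) hHmem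
    linarith
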